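/- For every x ∈ S_{2n}, the intersection K ∩ HxH is non-empty, where H is the subgroup preserving each pair {2i-1,2i} and K is the subgroup preserving parity. -/

import Mathlib

/-- The equivalence `Fin n × Fin 2 ≃ Fin (2*n)`, `(a, b) ↦ 2a + b`. -/
def pairFinEquiv (n : ℕ) : Fin n × Fin 2 ≃ Fin (2 * n) where
  toFun p := ⟨2 * p.1.1 + p.2.1, by have h1 := p.1.2; have h2 := p.2.2; omega⟩
  invFun i := (⟨i.1 / 2, by have := i.2; omega⟩, ⟨i.1 % 2, by omega⟩)
  left_inv := by
    rintro ⟨⟨a, ha⟩, ⟨b, hb⟩⟩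
    simp only [Prod.mk.injEq]
    constructor <;> apply Fin.ext <;> simp <;> omega
  right_inv := by
    rintro ⟨i, hi⟩
    apply Fin.ext
    simp
    omega

/-- The doubling map `w ↦ w̃`, sending a permutation of `{0, …, n-1}` to the permutation of
`{0, …, 2n-1}` with `w̃(2i) = 2w(i)` and `w̃(2i+1) = 2w(i)+1` (the zero-based version of
`w̃(2i) = 2w(i)`, `w̃(2i-1) = 2w(i)-1`). -/
def double {n : ℕ} (w : Equiv.Perm (Fin n)) : Equiv.Perm (Fin (2 * n)) :=
  (pairFinEquiv n).permCongr (Equiv.prodCongr w (Equiv.refl (Fin 2)))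

/-- The number of inversions of a permutation, i.e. its Coxeter length. -/
noncomputable def invLength {n : ℕ} (u : Equiv.Perm (Fin n)) : ℕ :=
  Set.ncard { p : Fin n × Fin n | p.1 < p.2 ∧ u p.2 < u p.1 }

/-- Bruhat order on the symmetric group: the reflexive-transitive closure of the relation
`a → a * t` where `t` is a transposition and `ℓ(a * t) > ℓ(a)`. -/
def BruhatLE {n : ℕ} (x w : Equiv.Perm (Fin n)) : Prop :=
  Relation.ReflTransGen
    (fun a b => (∃ i j : Fin n, b = a * Equiv.swap i j) ∧ invLength a < invLength b) x w

/-- The subgroup `H` of `S_{2n}` of permutations preserving each pair `{2i, 2i+1}`. -/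
def pairSubgroup (n : ℕ) : Subgroup (Equiv.Perm (Fin (2 * n))) where
  carrier := { u | ∀ i, (u i).1 / 2 = i.1 / 2 }
  one_mem' := by intro i; rfl
  mul_mem' := by
    intro a b ha hb i
    rw [Equiv.Perm.mul_apply, ha, hb]
  inv_mem' := by
    intro a ha i
    have h := ha (a⁻¹ i)
    rw [show a (a⁻¹ i) = i from by simp] at h
    omega

/-- The subgroup `K` of `S_{2n}` of parity-preserving permutations. -/
def paritySubgroup (n : ℕ) : Subgroup (Equiv.Perm (Fin (2 * n))) where
  carrier := { u | ∀ i, (u i).1 % 2 = i.1 % 2 }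
  one_mem' := by intro i; rfl
  mul_mem' := by
    intro a b ha hb i
    rw [Equiv.Perm.mul_apply, ha, hb]
  inv_mem' := by
    intro a ha i
    have h := ha (a⁻¹ i)
    rw [show a (a⁻¹ i) = i from by simp] at h
    omega

/-- A permutation of `{0,…,2n-1}` is bi-`H`-reduced if it is increasing on each pair
`{2i, 2i+1}` and so is its inverse. -/
def BiReduced {n : ℕ} (v : Equiv.Perm (Fin (2 * n))) : Prop :=
  ∀ i : Fin n,
    v ⟨2 * i.1, by have := i.2; omega⟩ < v ⟨2 * i.1 + 1, by have := i.2; omega⟩ ∧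
    v⁻¹ ⟨2 * i.1, by have := i.2; omega⟩ < v⁻¹ ⟨2 * i.1 + 1, by have := i.2; omega⟩

/-- Membership of `v` in the double coset `H x H` of `H = pairSubgroup n`. -/
def InPairDoubleCoset {n : ℕ} (x v : Equiv.Perm (Fin (2 * n))) : Prop :=
  ∃ h₁ ∈ pairSubgroup n, ∃ h₂ ∈ pairSubgroup n, v = h₁ * x * h₂

/-- The matrix attached to a double coset `HuH`: the `(i,j)` entry is
`#({2i, 2i+1} ∩ u({2j, 2j+1}))`. -/
noncomputable def cosetMatrix {n : ℕ} (u : Equiv.Perm (Fin (2 * n))) :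
    Matrix (Fin n) (Fin n) ℕ :=
  fun i j => Set.ncard { k : Fin (2 * n) | k.1 / 2 = j.1 ∧ (u k).1 / 2 = i.1 }

/-- The simple reflection `s_j = (j, j+1)` of `S_n` (zero-based). -/
def sRefl {n : ℕ} (j : {j : ℕ // j + 1 < n}) : Equiv.Perm (Fin n) :=
  Equiv.swap ⟨j.1, Nat.lt_of_succ_lt j.2⟩ ⟨j.1 + 1, j.2⟩

/-- A Boolean permutation: a product of distinct simple reflections. -/
def BooleanPerm {n : ℕ} (w : Equiv.Perm (Fin n)) : Prop :=
  ∃ js : List {j : ℕ // j + 1 < n}, (js.map Subtype.val).Nodup ∧ w = (js.map sRefl).prod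

/-- `w` avoids the pattern `(321)`. -/
def Avoids321 {n : ℕ} (w : Equiv.Perm (Fin n)) : Prop :=
  ¬ ∃ i j k : Fin n, i < j ∧ j < k ∧ w k < w j ∧ w j < w i

/-- `w` avoids the pattern `(3412)`. -/
def Avoids3412 {n : ℕ} (w : Equiv.Perm (Fin n)) : Prop :=
  ¬ ∃ i j k l : Fin n, i < j ∧ j < k ∧ k < l ∧ w k < w l ∧ w l < w i ∧ w i < w j

/-- `w` avoids the pattern `(4231)`. -/
def Avoids4231 {n : ℕ} (w : Equiv.Perm (Fin n)) : Prop :=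
  ¬ ∃ i j k l : Fin n, i < j ∧ j < k ∧ k < l ∧ w l < w j ∧ w j < w k ∧ w k < w i

-- Auxiliary lemmas
/-- For a fixed-point-free involution there is a 2-coloring alternating along it. -/
lemma exists_anticolor {β : Type*} (f : β → β) (hf : ∀ q, f (f q) = q)
    (hfp : ∀ q, f q ≠ q) : ∃ c : β → Prop, ∀ q, c (f q) ↔ ¬ c q := by
  classical
  let S : Setoid β := ⟨fun a b => b = a ∨ b = f a, by
    refine ⟨fun a => Or.inl rfl, ?_, ?_⟩
    · rintro a b (rfl | rfl)
      · exact Or.inl rfl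
      · exact Or.inr (hf a).symm
    · rintro a b c (rfl | rfl) (rfl | rfl) <;> simp [hf]⟩
  let rep : β → β := fun q => (Quotient.mk S q).out
  have hrep : ∀ q, q = rep q ∨ q = f (rep q) := by
    intro q
    have h : S.r (rep q) q := Quotient.exact (Quotient.out_eq _)
    exact h
  have hrepf : ∀ q, rep (f q) = rep q := by
    intro q
    have h : (Quotient.mk S (f q)) = Quotient.mk S q :=
      Quotient.sound (Or.inr (hf q).symm)
    simp only [rep, h]
  refine ⟨fun q => q ≠ rep q, fun q => ?_⟩
  show f q ≠ rep (f q) ↔ ¬ q ≠ rep q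
  rw [hrepf q]
  rcases hrep q with h | h
  · rw [← h]
    simp [hfp q]
  · have h1 : f q = rep q := (congrArg f h).trans (hf _)
    have h2 : q ≠ rep q := fun hq => hfp (rep q) (hq.symm.trans h).symm
    simp [h1, h2]

/-- Given two fixed-point-free involutions, there is a 2-coloring alternating along both. -/
lemma exists_color {α : Type*} (τ ρ : Equiv.Perm α)
    (hτ : ∀ a, τ (τ a) = a) (hτ' : ∀ a, τ a ≠ a)
    (hρ : ∀ a, ρ (ρ a) = a) (hρ' : ∀ a, ρ a ≠ a) :
    ∃ c : α → Prop, (∀ a, c (τ a) ↔ ¬ c a) ∧ (∀ a, c (ρ a) ↔ ¬ c a) := by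
  classical
  set σ : Equiv.Perm α := ρ * τ with hσ
  have hττ : τ * τ = 1 := by
    ext a; simp [Equiv.Perm.mul_apply, hτ a]
  have hτinv : τ⁻¹ = τ := inv_eq_of_mul_eq_one_right hττ
  have h1 : τ * σ * τ = σ⁻¹ := by
    have hρρ : ρ * ρ = 1 := by ext a; simp [Equiv.Perm.mul_apply, hρ a]
    have hρinv : ρ⁻¹ = ρ := inv_eq_of_mul_eq_one_right hρρ
    rw [hσ, mul_inv_rev, hτinv, hρinv]
    simp only [mul_assoc, hττ, mul_one]
  have hconj : ∀ k : ℤ, τ * σ ^ k * τ = σ ^ (-k) := by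
    intro k
    have h2 := map_zpow (MulAut.conj τ) σ k
    simp only [MulAut.conj_apply, hτinv] at h2
    rw [h2, h1, inv_zpow, ← zpow_neg]
  have hτσ : ∀ (k : ℤ) (z : α), τ ((σ ^ k) z) = (σ ^ (-k)) (τ z) := by
    intro k z
    have h3 := congrArg (fun g : Equiv.Perm α => g (τ z)) (hconj k)
    simpa [Equiv.Perm.mul_apply, hτ] using h3
  have hστ : ∀ z : α, σ (τ z) = ρ z := by
    intro z; simp [hσ, Equiv.Perm.mul_apply, hτ]
  have claim1 : ∀ a : α, ¬ σ.SameCycle a (τ a) := by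
    rintro a ⟨k, hk⟩
    rcases Int.even_or_odd k with ⟨m, hm⟩ | ⟨m, hm⟩
    · apply hτ' ((σ ^ m) a)
      have h5 : (σ ^ (-m)) ((σ ^ k) a) = (σ ^ m) a := by
        rw [← Equiv.Perm.mul_apply, ← zpow_add, show -m + k = m by omega]
      rw [hτσ m a, ← hk]
      exact h5
    · apply hρ' ((σ ^ (m + 1)) a)
      have h5 : σ ((σ ^ (-(m + 1))) ((σ ^ k) a)) = (σ ^ (m + 1)) a := by
        rw [← Equiv.Perm.mul_apply, ← zpow_one_add, ← Equiv.Perm.mul_apply,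
          ← zpow_add, show 1 + -(m + 1) + k = m + 1 by omega]
      rw [← hστ, hτσ (m + 1) a, ← hk]
      exact h5
  have compat : ∀ a b : α, σ.SameCycle a b → σ.SameCycle (τ a) (τ b) := by
    rintro a b ⟨k, hk⟩
    exact ⟨-k, by rw [← hτσ, hk]⟩
  let S : Setoid α := ⟨σ.SameCycle, ⟨fun a => Equiv.Perm.SameCycle.refl σ a,
    fun h => h.symm, fun h h' => h.trans h'⟩⟩
  let fQ : Quotient S → Quotient S := Quotient.map (sa := S) (sb := S) τ compat
  have hfQ : ∀ q, fQ (fQ q) = q := by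
    intro q
    induction q using Quotient.ind with
    | _ a => show Quotient.mk S (τ (τ a)) = Quotient.mk S a; rw [hτ]
  have hfQ' : ∀ q, fQ q ≠ q := by
    intro q
    induction q using Quotient.ind with
    | _ a =>
      intro h
      have h6 : σ.SameCycle (τ a) a := Quotient.exact h
      exact claim1 a h6.symm
  obtain ⟨cQ, hcQ⟩ := exists_anticolor fQ hfQ hfQ'
  have hmk : ∀ b : α, Quotient.mk S (τ b) = fQ (Quotient.mk S b) :=
    fun b => (Quotient.map_mk _ _ _).symm
  have hkey : ∀ a : α, cQ (Quotient.mk S (τ a)) ↔ ¬ cQ (Quotient.mk S a) := by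
    intro a; rw [hmk]; exact hcQ _
  refine ⟨fun a => cQ (Quotient.mk S a), fun a => hkey a, fun a => ?_⟩
  have hrel : σ.SameCycle (τ a) (ρ a) := ⟨1, by simpa using hστ a⟩
  have h7 : Quotient.mk S (ρ a) = Quotient.mk S (τ a) :=
    (Quotient.sound hrel).symm
  show cQ (Quotient.mk S (ρ a)) ↔ ¬ cQ (Quotient.mk S a)
  rw [h7]
  exact hkey a

/-- Adjusting within τ-pairs to match a coloring with a predicate. -/
lemma half_lemma {α : Type*} (τ : Equiv.Perm α) (hτ : ∀ a, τ (τ a) = a)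
    (c p : α → Prop) (hc : ∀ a, c (τ a) ↔ ¬ c a) (hp : ∀ a, p (τ a) ↔ ¬ p a) :
    ∃ h : Equiv.Perm α, (∀ a, h a = a ∨ h a = τ a) ∧ (∀ a, c (h a) ↔ p a) ∧
      (∀ a, p (h a) ↔ c a) := by
  classical
  have hinv : Function.Involutive (fun a => if c a ↔ p a then a else τ a) := by
    intro a
    by_cases h : c a ↔ p a
    · simp [h]
    · have h2 : ¬ (c (τ a) ↔ p (τ a)) := by rw [hc, hp]; tauto
      simp only [h, if_false, h2, hτ]
  refine ⟨hinv.toPerm _, fun a => ?_, fun a => ?_, fun a => ?_⟩ <;>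
    simp only [Function.Involutive.coe_toPerm] <;> by_cases h : c a ↔ p a
  · simp [h]
  · simp [h]
  · simpa [h] using h
  · simp only [h, if_false]
    rw [hc]; tauto
  · simpa [h] using h.symm
  · simp only [h, if_false]
    rw [hp]; tauto

/-- For every `x ∈ S_{2n}`, the intersection `K ∩ HxH` is non-empty. -/
theorem stmt11 (n : ℕ) (x : Equiv.Perm (Fin (2 * n))) :
    ∃ u ∈ paritySubgroup n, InPairDoubleCoset x u := by
  classical
  -- the "partner" involution k ↦ k ± 1 within each pair
  have hb : ∀ k : Fin (2 * n), 2 * (k.1 / 2) + (1 - k.1 % 2) < 2 * n := by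
    intro k; have := k.2; omega
  set t : Fin (2 * n) → Fin (2 * n) := fun k => ⟨2 * (k.1 / 2) + (1 - k.1 % 2), hb k⟩ with ht
  have htt : Function.Involutive t := by
    intro k; apply Fin.ext; simp only [ht]; omega
  set τ : Equiv.Perm (Fin (2 * n)) := htt.toPerm with hτdef
  have hτval : ∀ k : Fin (2 * n), (τ k).1 = 2 * (k.1 / 2) + (1 - k.1 % 2) := by
    intro k; rfl
  have hττ : ∀ k, τ (τ k) = k := fun k => htt k
  have hτne : ∀ k, τ k ≠ k := by
    intro k h
    have := congrArg Fin.val h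
    rw [hτval] at this
    have := k.2
    omega
  have hτdiv : ∀ k : Fin (2 * n), (τ k).1 / 2 = k.1 / 2 := by
    intro k; rw [hτval]; omega
  have hτodd : ∀ k : Fin (2 * n), Odd (τ k).1 ↔ ¬ Odd k.1 := by
    intro k
    rw [Nat.odd_iff, Nat.odd_iff, hτval]
    omega
  set ρ : Equiv.Perm (Fin (2 * n)) := x⁻¹ * τ * x with hρdef
  have hρval : ∀ a, ρ a = x⁻¹ (τ (x a)) := by intro a; rfl
  have hρρ : ∀ a, ρ (ρ a) = a := by
    intro a
    simp [hρval, hττ]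
  have hρne : ∀ a, ρ a ≠ a := by
    intro a h
    rw [hρval] at h
    apply hτne (x a)
    have := congrArg x h
    rwa [show x (x⁻¹ (τ (x a))) = τ (x a) from by simp] at this
  obtain ⟨c, hcτ, hcρ⟩ := exists_color τ ρ hττ hτne hρρ hρne
  -- build h₂ matching colors to parities in the source
  obtain ⟨h₂, hm₂, hc₂, -⟩ := half_lemma τ hττ c (fun k => Odd k.1) hcτ hτodd
  -- the color transported to the target
  set d : Fin (2 * n) → Prop := fun y => c (x⁻¹ y) with hd
  have hdτ : ∀ y, d (τ y) ↔ ¬ d y := by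
    intro y
    have h1 : ρ (x⁻¹ y) = x⁻¹ (τ y) := by
      rw [hρval, show x (x⁻¹ y) = y from by simp]
    simp only [hd]
    rw [← h1]
    exact hcρ _
  obtain ⟨h₁, hm₁, -, hp₁⟩ := half_lemma τ hττ d (fun k => Odd k.1) hdτ hτodd
  have hmem₁ : h₁ ∈ pairSubgroup n := by
    intro i
    rcases hm₁ i with h | h <;> rw [h]
    exact hτdiv i
  have hmem₂ : h₂ ∈ pairSubgroup n := by
    intro i
    rcases hm₂ i with h | h <;> rw [h]
    exact hτdiv i
  refine ⟨h₁ * x * h₂, ?_, h₁, hmem₁, h₂, hmem₂, rfl⟩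
  intro i
  have e1 : (h₁ * x * h₂) i = h₁ (x (h₂ i)) := rfl
  have e2 : c (h₂ i) ↔ Odd i.1 := hc₂ i
  have e3 : d (x (h₂ i)) ↔ c (h₂ i) := by
    simp only [hd, show x⁻¹ (x (h₂ i)) = h₂ i from by simp]
  have e4 : Odd ((h₁ (x (h₂ i))).1) ↔ d (x (h₂ i)) := hp₁ _
  have e5 : Odd (((h₁ * x * h₂) i).1) ↔ Odd i.1 := by
    rw [e1]; rw [e4, e3, e2]
  rw [Nat.odd_iff, Nat.odd_iff] at e5
  omega
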